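/- Let n be a prime number and let a_1, a_2, ... be any sequence of integers. Then the rational number Σ_{k=1}^{n-1} (1/k) * F^Δ(n,k) is an integer, where F^Δ(n,k) = Σ_{λ_1+...+λ_k=n, λ_i>0} a_{λ_1} a_{λ_2} ... a_{λ_k} is the sum, over all ordered compositions of n into exactly k positive parts, of the products of the corresponding terms of the sequence. -/

import Mathlib

/-- The compositae `F^Δ(n,k)`: the sum over all ordered compositions of `n` into
exactly `k` positive parts of the products `a (λ 1) * ... * a (λ k)`. -/
def compositae (a : ℕ → ℤ) (n k : ℕ) : ℤ :=
  ∑ c ∈ (Finset.Nat.antidiagonalTuple k n).filter (fun c => ∀ i, 0 < c i),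
    ∏ i, a (c i)

open Finset Function
open scoped Fin.NatCast Fin.IntCast Fin.CommRing

lemma key_dvd (a : ℕ → ℤ) {n m : ℕ} (hn : n.Prime) (hkn : m + 1 < n) :
    ((m + 1 : ℕ) : ℤ) ∣ compositae a n (m + 1) := by
  classical
  set K := m + 1 with hK
  haveI : NeZero K := ⟨by omega⟩
  -- the rotation map
  set σ : (Fin K → ℕ) → (Fin K → ℕ) := fun c i => c (i + 1) with hσ
  have hit : ∀ (t : ℕ) (c : Fin K → ℕ) (i : Fin K), σ^[t] c i = c (i + (t : Fin K)) := by
    intro t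
    induction t with
    | zero => intro c i; simp
    | succ t ih =>
      intro c i
      rw [Function.iterate_succ_apply, ih (σ c) i]
      show c (i + (t : Fin K) + 1) = _
      have : ((t + 1 : ℕ) : Fin K) = (t : Fin K) + 1 := by push_cast; ring
      rw [this, add_assoc]
  have hid : ∀ c, σ^[K] c = c := by
    intro c; funext i; rw [hit]; simp
  have hid2 : ∀ (s : ℕ) (c : Fin K → ℕ), σ^[K * s] c = c := by
    intro s
    induction s with
    | zero => intro c; simp
    | succ s ih =>
      intro c
      rw [Nat.mul_succ, Function.iterate_add_apply, ih, hid]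
  have hinj : Function.Injective σ := by
    have h : Function.LeftInverse (σ^[m]) σ := by
      intro c
      rw [← Function.iterate_succ_apply]
      exact hid c
    exact h.injective
  set S : Finset (Fin K → ℕ) :=
    (Finset.Nat.antidiagonalTuple K n).filter (fun c => ∀ i, 0 < c i) with hSdef
  have hsum : ∀ (c : Fin K → ℕ), ∑ i, σ c i = ∑ i, c i := by
    intro c
    exact Fintype.sum_equiv (Equiv.addRight 1) _ _ (fun i => rfl)
  have hprod : ∀ (c : Fin K → ℕ), ∏ i, a (σ c i) = ∏ i, a (c i) := by
    intro c
    exact Fintype.prod_equiv (Equiv.addRight 1) _ _ (fun i => rfl)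
  have hmapsto : ∀ c ∈ S, σ c ∈ S := by
    intro c hc
    rw [hSdef, Finset.mem_filter, Finset.Nat.mem_antidiagonalTuple] at hc ⊢
    exact ⟨by rw [hsum]; exact hc.1, fun i => hc.2 _⟩
  have hmapsto' : ∀ (t : ℕ), ∀ c ∈ S, σ^[t] c ∈ S := by
    intro t
    induction t with
    | zero => intro c hc; simpa using hc
    | succ t ih =>
      intro c hc
      rw [Function.iterate_succ_apply']
      exact hmapsto _ (ih c hc)
  have hprodit : ∀ (t : ℕ) (c : Fin K → ℕ), ∏ i, a (σ^[t] c i) = ∏ i, a (c i) := by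
    intro t
    induction t with
    | zero => intro c; simp
    | succ t ih =>
      intro c
      rw [Function.iterate_succ_apply']
      rw [show (∏ i, a (σ (σ^[t] c) i)) = ∏ i, a ((σ^[t] c) i) from hprod _]
      exact ih c
  -- freeness
  have hfree : ∀ c ∈ S, ∀ t < K, σ^[t] c = c → t = 0 := by
    intro c hc t ht hfix
    by_contra ht0
    have ht1 : 1 ≤ t := Nat.one_le_iff_ne_zero.mpr ht0
    have hfix' : ∀ i : Fin K, c (i + (t : Fin K)) = c i := by
      intro i
      have := congrFun hfix i
      rwa [hit] at this
    -- multiples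
    have gen : ∀ (g : Fin K), (∀ i, c (i + g) = c i) → ∀ (s : ℕ) (i : Fin K), c (i + s • g) = c i := by
      intro g hg s
      induction s with
      | zero => intro i; simp
      | succ s ih =>
        intro i
        have h2 : i + (s + 1) • g = (i + g) + s • g := by
          rw [succ_nsmul]; abel
        rw [h2, ih (i + g), hg i]
    have hrmul : ∀ (r : Fin K) (i : Fin K), c (i + r * (t : Fin K)) = c i := by
      intro r i
      have := gen (t : Fin K) hfix' r.val i
      rwa [nsmul_eq_mul, Fin.cast_val_eq_self] at this
    set d : ℕ := Nat.gcd t K with hd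
    have hd0 : 0 < d := Nat.gcd_pos_of_pos_left _ ht1
    have hdK : d ∣ K := Nat.gcd_dvd_right t K
    have hdlt : d < K := lt_of_le_of_lt (Nat.le_of_dvd ht1 (Nat.gcd_dvd_left t K) |>.trans (le_refl t)) ht
    -- (d : Fin K) is a multiple of (t : Fin K)
    have hcast : (d : Fin K) = ((Nat.gcdA t K : ℤ) : Fin K) * (t : Fin K) := by
      have h1 : (d : ℤ) = t * Nat.gcdA t K + K * Nat.gcdB t K := Nat.gcd_eq_gcd_ab t K
      have h2 : ((d : ℤ) : Fin K) = (((t : ℤ) * Nat.gcdA t K + (K : ℤ) * Nat.gcdB t K : ℤ) : Fin K) := by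
        rw [← h1]
      push_cast at h2
      have hm0 : (m : Fin K) + 1 = 0 := by
        have h3 : ((m + 1 : ℕ) : Fin K) = 0 := Fin.natCast_self (m + 1)
        rwa [Nat.cast_add, Nat.cast_one] at h3
      rw [show ((K : ℕ) : Fin K) = 0 from Fin.natCast_self K, zero_mul, add_zero] at h2
      rw [h2]; ring
    have hdper : ∀ i : Fin K, c (i + (d : Fin K)) = c i := by
      intro i
      rw [hcast]
      exact hrmul _ i
    -- periodic function on ℕ
    set g' : ℕ → ℕ := fun j => c ((j : Fin K)) with hg'
    have hg'per : ∀ (s j : ℕ), g' (j + s * d) = g' j := by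
      intro s j
      have : ((j + s * d : ℕ) : Fin K) = (j : Fin K) + (s : Fin K) * (d : Fin K) := by
        push_cast; ring
      show c (((j + s * d : ℕ) : Fin K)) = c ((j : Fin K))
      rw [this]
      have := gen (d : Fin K) hdper s (j : Fin K)
      rwa [nsmul_eq_mul] at this
    set e : ℕ := K / d with he
    have hKed : K = e * d := (Nat.div_mul_cancel hdK).symm
    have hblock : ∀ (E : ℕ), ∑ j ∈ Finset.range (E * d), g' j = E * ∑ j ∈ Finset.range d, g' j := by
      intro E
      induction E with
      | zero => simp
      | succ E ih =>
        have h5 : (E + 1) * d = E * d + d := by ring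
        rw [h5, Finset.sum_range_add, ih]
        have : ∑ j ∈ Finset.range d, g' (E * d + j) = ∑ j ∈ Finset.range d, g' j := by
          apply Finset.sum_congr rfl
          intro j _
          rw [add_comm (E * d) j]
          exact hg'per E j
        rw [this]; ring
    have hcsum : ∑ i : Fin K, c i = n := by
      rw [hSdef, Finset.mem_filter, Finset.Nat.mem_antidiagonalTuple] at hc
      exact hc.1
    have hrange : ∑ i : Fin K, c i = ∑ j ∈ Finset.range K, g' j := by
      rw [← Fin.sum_univ_eq_sum_range g' K]
      apply Finset.sum_congr rfl
      intro i _
      show c i = c ((i.val : Fin K))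
      rw [Fin.cast_val_eq_self]
    have hedvd : e ∣ n := by
      refine ⟨∑ j ∈ Finset.range d, g' j, ?_⟩
      rw [← hcsum, hrange, hKed, hblock]
    have he1 : e ≠ 1 := by
      intro h1
      rw [h1, one_mul] at hKed
      omega
    have heK : e ≤ K := Nat.le_of_dvd (Nat.succ_pos m) ⟨d, by omega⟩
    rcases (hn.eq_one_or_self_of_dvd e hedvd) with h | h
    · exact he1 h
    · omega
  -- orbit partition
  set R : Setoid (Fin K → ℕ) :=
    ⟨fun c c' => ∃ u : ℕ, σ^[u] c = c', by
      constructor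
      · intro c; exact ⟨0, rfl⟩
      · rintro c c' ⟨u, rfl⟩
        refine ⟨u * m, ?_⟩
        rw [← Function.iterate_add_apply]
        have : u * m + u = K * u := by rw [hK]; ring
        rw [this]
        exact hid2 u c
      · rintro c c' c'' ⟨u, rfl⟩ ⟨v, rfl⟩
        exact ⟨v + u, Function.iterate_add_apply σ v u c⟩⟩ with hR
  show ((K : ℕ) : ℤ) ∣ ∑ c ∈ S, ∏ i, a (c i)
  rw [Finset.sum_partition R]
  apply Finset.dvd_sum
  intro xbar hxbar
  obtain ⟨c0, hc0S, rfl⟩ := Finset.mem_image.mp hxbar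
  have horbit : S.filter (fun y => ⟦y⟧ = (⟦c0⟧ : Quotient R)) =
      (Finset.range K).image (fun u => σ^[u] c0) := by
    ext y
    simp only [Finset.mem_filter, Finset.mem_image, Finset.mem_range]
    constructor
    · rintro ⟨hyS, hy⟩
      have hr : R.r y c0 := Quotient.eq.mp hy
      obtain ⟨u, hu⟩ := hr
      -- y = σ^[v] c0 with v = u * m reduced mod K
      have : σ^[u * m] c0 = y := by
        subst hu
        rw [← Function.iterate_add_apply]
        have h3 : u * m + u = K * u := by rw [hK]; ring
        rw [h3]
        exact hid2 u y
      refine ⟨(u * m) % K, Nat.mod_lt _ (Nat.succ_pos m), ?_⟩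
      rw [← this]
      conv_rhs => rw [show u * m = K * (u * m / K) + (u * m) % K from (Nat.div_add_mod _ _).symm]
      rw [Function.iterate_add_apply, hid2]
    · rintro ⟨u, hu, rfl⟩
      refine ⟨hmapsto' u c0 hc0S, Quotient.eq.mpr ⟨K - u, ?_⟩⟩
      rw [← Function.iterate_add_apply]
      have : K - u + u = K := by omega
      rw [this, hid]
  rw [horbit]
  have hinj' : ∀ x ∈ Finset.range K, ∀ y ∈ Finset.range K,
      σ^[x] c0 = σ^[y] c0 → x = y := by
    intro x hx y hy hxy
    rw [Finset.mem_range] at hx hy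
    rcases le_total x y with h | h
    · obtain ⟨w, rfl⟩ := Nat.exists_eq_add_of_le h
      rw [Function.iterate_add_apply] at hxy
      have := (hinj.iterate x) hxy
      have hw := hfree c0 hc0S w (by omega) this.symm
      omega
    · obtain ⟨w, rfl⟩ := Nat.exists_eq_add_of_le h
      rw [Function.iterate_add_apply] at hxy
      have := (hinj.iterate y) hxy.symm
      have hw := hfree c0 hc0S w (by omega) this.symm
      omega
  rw [Finset.sum_image hinj']
  have : ∀ u ∈ Finset.range K, (∏ i, a (σ^[u] c0 i)) = ∏ i, a (c0 i) := by
    intro u _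
    exact hprodit u c0
  rw [Finset.sum_congr rfl this, Finset.sum_const, Finset.card_range, nsmul_eq_mul]
  exact Dvd.intro _ rfl

/-- If `n` is prime, then for any integer sequence `a` the rational number
`Σ_{k=1}^{n-1} (1/k) * F^Δ(n,k)` is an integer. -/
theorem stmt_3 (a : ℕ → ℤ) (n : ℕ) (hn : n.Prime) :
    ∃ z : ℤ, ∑ k ∈ Finset.Icc 1 (n - 1), (1 / (k : ℚ)) * (compositae a n k : ℚ) = z := by
  refine ⟨∑ k ∈ Finset.Icc 1 (n - 1), compositae a n k / k, ?_⟩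
  push_cast
  apply Finset.sum_congr rfl
  intro k hk
  rw [Finset.mem_Icc] at hk
  obtain ⟨hk1, hk2⟩ := hk
  have hkn : k < n := by have := hn.two_le; omega
  obtain ⟨m, rfl⟩ : ∃ m, k = m + 1 := ⟨k - 1, by omega⟩
  obtain ⟨d, hd⟩ := key_dvd a hn hkn
  rw [hd]
  have hk0 : ((m + 1 : ℕ) : ℤ) ≠ 0 := by positivity
  rw [Int.mul_ediv_cancel_left _ hk0]
  have hq0 : ((m + 1 : ℕ) : ℚ) ≠ 0 := by positivity
  push_cast
  field_simp
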